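/- Theorem (Strong local robustness of SM-NLMS). Assume the noise is bounded by a known constant B ≥ 0, i.e., |n(k)| ≤ B for all k, and that the threshold satisfies γ̄ ≥ 2B. Then the sequence of squared coefficient deviations is monotonically nonincreasing: ‖w_o − w(k+1)‖ ≤ ‖w_o − w(k)‖ for every k ∈ ℕ. -/

import Mathlib

open RealInnerProductSpace

lemma aux_sm (E nn γ B A X : ℝ) (hA : 0 < A) (hXA : X ≤ A) (hX : 0 ≤ X)
    (hn : |nn| ≤ B) (hγ : 2 * B ≤ γ) (hγ0 : 0 ≤ γ) (hE : γ < |E|) :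
    ((1 - γ / |E|) / A * E) ^ 2 * X ≤ 2 * (((1 - γ / |E|) / A * E) * (E - nn)) := by
  have hB : 0 ≤ B := (abs_nonneg nn).trans hn
  have hn1 : -B ≤ nn := neg_le_of_abs_le hn
  have hn2 : nn ≤ B := le_of_abs_le hn
  rcases abs_cases E with ⟨hE1, hE2⟩ | ⟨hE1, hE2⟩
  · rw [hE1] at hE ⊢
    have hEpos : 0 < E := lt_of_le_of_lt hγ0 hE
    have hc : (1 - γ / E) / A * E = (E - γ) / A := by field_simp
    rw [hc]
    have hcpos : 0 ≤ (E - γ) / A := div_nonneg (by linarith) hA.le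
    calc ((E - γ) / A) ^ 2 * X ≤ ((E - γ) / A) ^ 2 * A := by
          exact mul_le_mul_of_nonneg_left hXA (sq_nonneg _)
      _ = ((E - γ) / A) * (E - γ) := by field_simp
      _ ≤ 2 * (((E - γ) / A) * (E - nn)) := by
          rw [two_mul]
          nlinarith
  · rw [hE1] at hE ⊢
    have hEneg : E < 0 := by linarith
    have hc : (1 - γ / (-E)) / A * E = (E + γ) / A := by
      have hEne : E ≠ 0 := ne_of_lt hEneg
      rw [div_neg]; field_simp; ring
    rw [hc]
    have hcneg : (E + γ) / A ≤ 0 := by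
      apply div_nonpos_of_nonpos_of_nonneg (by linarith) hA.le
    calc ((E + γ) / A) ^ 2 * X ≤ ((E + γ) / A) ^ 2 * A := by
          exact mul_le_mul_of_nonneg_left hXA (sq_nonneg _)
      _ = ((E + γ) / A) * (E + γ) := by field_simp
      _ ≤ 2 * (((E + γ) / A) * (E - nn)) := by nlinarith

theorem sm_nlms_strong_local_robustness (N : ℕ)
    (w_o : EuclideanSpace ℝ (Fin (N + 1)))
    (x : ℕ → EuclideanSpace ℝ (Fin (N + 1))) (n : ℕ → ℝ) (δ γ B : ℝ)
    (hδ : 0 < δ) (hγ0 : 0 ≤ γ) (hB : 0 ≤ B)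
    (hn : ∀ k, |n k| ≤ B) (hγ : 2 * B ≤ γ)
    (w : ℕ → EuclideanSpace ℝ (Fin (N + 1)))
    (d e et α μb : ℕ → ℝ)
    (hd : ∀ k, d k = ⟪w_o, x k⟫ + n k)
    (he : ∀ k, e k = d k - ⟪w k, x k⟫)
    (het : ∀ k, et k = ⟪w_o - w k, x k⟫)
    (hα : ∀ k, α k = ‖x k‖ ^ 2 + δ)
    (hμ : ∀ k, μb k = 1 - γ / |e k|)
    (hupd : ∀ k, w (k + 1) =
      if γ < |e k| then w k + ((μb k / α k) * e k) • x k else w k) :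
    ∀ k, ‖w_o - w (k + 1)‖ ≤ ‖w_o - w k‖ := by
  intro k
  rw [hupd k]
  split_ifs with h
  · have hA : 0 < α k := by rw [hα]; positivity
    have hiet : ⟪w_o - w k, x k⟫ = e k - n k := by
      rw [← het, het, he, hd, inner_sub_left]; ring
    have key := aux_sm (e k) (n k) γ B (α k) (‖x k‖ ^ 2) hA
      (by rw [hα]; linarith) (sq_nonneg _) (hn k) hγ hγ0 h
    rw [hμ]
    have hgoal : ‖w_o - (w k + ((1 - γ / |e k|) / α k * e k) • x k)‖ ^ 2
        ≤ ‖w_o - w k‖ ^ 2 := by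
      have : w_o - (w k + ((1 - γ / |e k|) / α k * e k) • x k)
          = (w_o - w k) - ((1 - γ / |e k|) / α k * e k) • x k := by abel
      rw [this, norm_sub_sq_real, inner_smul_right, norm_smul, mul_pow,
        Real.norm_eq_abs, sq_abs, hiet]
      nlinarith [key]
    exact (pow_le_pow_iff_left₀ (norm_nonneg _) (norm_nonneg _) two_ne_zero).mp hgoal
  · exact le_rfl
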